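/- (Eckart–Young for symmetric matrices, critical point characterization) Let T ∈ Sym²(ℝ^n) be invertible with n distinct eigenvalues and eigendecomposition T = U Σ Uᵀ. Then S is a critical point of S ↦ ‖T−S‖_F² restricted to the manifold of symmetric matrices of rank exactly r if and only if S = U Σ_I Uᵀ for some subset I ⊂ {1,...,n} with |I| = r, where Σ_I keeps the diagonal entries of Σ with index in I and zeroes the rest. In particular there are exactly binom(n,r) critical points. -/
import Mathlib


open Matrix

/-- Eckart–Young for symmetric matrices (critical point characterization): let
`T = U diag(σ) Uᵀ` with `U` orthogonal and `σ` a family of distinct non-zero eigenvalues.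
A symmetric matrix `S` is a critical point of `S ↦ ‖T − S‖_F²` on the manifold of
symmetric matrices of rank exactly `r` (i.e. `S (T − S) = 0` and `rk S = r`) if and only
if `S = U diag(σ_I) Uᵀ` for some `r`-subset `I`, where `σ_I` keeps the entries of `σ`
indexed by `I` and zeroes the rest. In particular there are exactly `binom(n,r)` such
critical points. -/
theorem stmt12 (n r : ℕ) (σ : Fin n → ℝ)
    (hσinj : Function.Injective σ) (hσ0 : ∀ i, σ i ≠ 0)
    (U : Matrix (Fin n) (Fin n) ℝ) (hU : U * Uᵀ = 1)
    (T : Matrix (Fin n) (Fin n) ℝ) (hT : T = U * Matrix.diagonal σ * Uᵀ) :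
    (∀ S : Matrix (Fin n) (Fin n) ℝ, S.IsSymm →
      ((S * (T - S) = 0 ∧ S.rank = r) ↔
        ∃ I : Finset (Fin n), I.card = r ∧
          S = U * Matrix.diagonal (fun i => if i ∈ I then σ i else 0) * Uᵀ)) ∧
    {S : Matrix (Fin n) (Fin n) ℝ | S.IsSymm ∧ S * (T - S) = 0 ∧ S.rank = r}.ncard
      = n.choose r := by
  have hUU : Uᵀ * U = 1 := mul_eq_one_comm.mp hU
  have hUdet : IsUnit U.det := Matrix.isUnit_det_of_right_inverse hU
  have hUTdet : IsUnit Uᵀ.det := Matrix.isUnit_det_of_right_inverse hUU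
  -- conjugation facts
  have conj_mul : ∀ A B : Matrix (Fin n) (Fin n) ℝ,
      (U * A * Uᵀ) * (U * B * Uᵀ) = U * (A * B) * Uᵀ := by
    intro A B
    calc (U * A * Uᵀ) * (U * B * Uᵀ) = U * (A * ((Uᵀ * U) * (B * Uᵀ))) := by
          simp only [Matrix.mul_assoc]
      _ = U * (A * B) * Uᵀ := by rw [hUU, Matrix.one_mul]; simp only [Matrix.mul_assoc]
  have conj_inj : ∀ A B : Matrix (Fin n) (Fin n) ℝ,
      U * A * Uᵀ = U * B * Uᵀ → A = B := by
    intro A B h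
    have := congrArg (fun X => Uᵀ * X * U) h
    simpa only [Matrix.mul_assoc, ← Matrix.mul_assoc Uᵀ U, hUU, Matrix.one_mul,
      hUU, Matrix.mul_one] using this
  have conj_rank : ∀ A : Matrix (Fin n) (Fin n) ℝ, (U * A * Uᵀ).rank = A.rank := by
    intro A
    rw [Matrix.rank_mul_eq_left_of_isUnit_det Uᵀ (U * A) hUTdet,
      Matrix.rank_mul_eq_right_of_isUnit_det U A hUdet]
  -- the rank of the truncated diagonal is the cardinality of `I`
  have rank_diagI : ∀ I : Finset (Fin n),
      (Matrix.diagonal (fun i => if i ∈ I then σ i else 0)).rank = I.card := by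
    intro I
    rw [Matrix.rank_diagonal]
    rw [Fintype.card_subtype]
    congr 1
    ext i
    by_cases hi : i ∈ I <;> simp [hi, hσ0 i]
  -- main characterization
  have hmain : ∀ S : Matrix (Fin n) (Fin n) ℝ, S.IsSymm →
      ((S * (T - S) = 0 ∧ S.rank = r) ↔
        ∃ I : Finset (Fin n), I.card = r ∧
          S = U * Matrix.diagonal (fun i => if i ∈ I then σ i else 0) * Uᵀ) := by
    intro S hS
    constructor
    · rintro ⟨h1, h2⟩
      set M : Matrix (Fin n) (Fin n) ℝ := Uᵀ * S * U with hM
      have hSM : U * M * Uᵀ = S := by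
        rw [hM]
        calc U * (Uᵀ * S * U) * Uᵀ = (U * Uᵀ) * S * (U * Uᵀ) := by
              simp only [Matrix.mul_assoc]
          _ = S := by rw [hU, Matrix.one_mul, Matrix.mul_one]
      have hMsymm : Mᵀ = M := by
        rw [hM]
        simp only [Matrix.transpose_mul, Matrix.transpose_transpose, Matrix.mul_assoc]
        rw [hS.eq]
      -- translate criticality
      have hcrit : M * (Matrix.diagonal σ - M) = 0 := by
        apply conj_inj
        rw [Matrix.mul_zero, Matrix.zero_mul]
        calc U * (M * (Matrix.diagonal σ - M)) * Uᵀ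
            = (U * M * Uᵀ) * (U * (Matrix.diagonal σ - M) * Uᵀ) := (conj_mul _ _).symm
          _ = S * (T - S) := by
              rw [hSM, Matrix.mul_sub, Matrix.sub_mul, ← hT, hSM]
          _ = 0 := h1
      have hMD : M * Matrix.diagonal σ = M * M := by
        have := sub_eq_zero.mpr (rfl : M * M = M * M)
        have h' := hcrit
        rw [Matrix.mul_sub, sub_eq_zero] at h'
        exact h'
      -- commute with the diagonal
      have hcomm : M * Matrix.diagonal σ = Matrix.diagonal σ * M := by
        have ht := congrArg Matrix.transpose hMD
        simp only [Matrix.transpose_mul, Matrix.diagonal_transpose, hMsymm] at ht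
        rw [hMD, ← ht]
      -- off-diagonal entries vanish
      have hoff : ∀ i j, i ≠ j → M i j = 0 := by
        intro i j hij
        have := congrFun (congrFun hcomm i) j
        rw [Matrix.mul_diagonal, Matrix.diagonal_mul] at this
        have hσij : σ j ≠ σ i := fun h => hij (hσinj h).symm
        have : M i j * (σ j - σ i) = 0 := by ring_nf; linarith [this]
        rcases mul_eq_zero.mp this with h | h
        · exact h
        · exact absurd (sub_eq_zero.mp h) hσij
      have hMdiag : M = Matrix.diagonal (fun i => M i i) := by
        ext i j
        by_cases hij : i = j
        · subst hij; simp
        · rw [Matrix.diagonal_apply_ne _ hij]; exact hoff i j hij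
      -- the diagonal entries are 0 or σ i
      have hval : ∀ i, M i i = 0 ∨ M i i = σ i := by
        intro i
        have := congrFun (congrFun hMD i) i
        rw [Matrix.mul_diagonal] at this
        have h2 : (M * M) i i = M i i * M i i := by
          rw [Matrix.mul_apply]
          rw [Finset.sum_eq_single i]
          · intro b _ hb; rw [hoff i b (Ne.symm hb), zero_mul]
          · intro h; exact absurd (Finset.mem_univ i) h
        rw [h2] at this
        rcases mul_eq_zero.mp (by linarith [this] : M i i * (σ i - M i i) = 0) with h | h
        · exact Or.inl h
        · exact Or.inr (by linarith [sub_eq_zero.mp h])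
      classical
      refine ⟨Finset.univ.filter (fun i => M i i ≠ 0), ?_, ?_⟩
      · -- cardinality
        have hr : S.rank = (Finset.univ.filter (fun i => M i i ≠ 0)).card := by
          rw [← hSM, conj_rank, hMdiag, Matrix.rank_diagonal, Fintype.card_subtype]
          simp only [Matrix.diagonal_apply_eq]
        omega
      · have hdfun : (fun i => M i i)
            = (fun i => if i ∈ Finset.univ.filter (fun j => M j j ≠ 0) then σ i else 0) := by
          funext i
          by_cases h : M i i = 0
          · simp [Finset.mem_filter, h]
          · rw [if_pos (Finset.mem_filter.mpr ⟨Finset.mem_univ i, h⟩)]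
            exact (hval i).resolve_left h
        rw [← hSM]
        conv_lhs => rw [hMdiag, hdfun]
    · rintro ⟨I, hI, rfl⟩
      set d : Fin n → ℝ := fun i => if i ∈ I then σ i else 0 with hd
      constructor
      · have key : Matrix.diagonal d * (Matrix.diagonal σ - Matrix.diagonal d) = 0 := by
          rw [Matrix.mul_sub, Matrix.diagonal_mul_diagonal, Matrix.diagonal_mul_diagonal,
            sub_eq_zero]
          refine congrArg Matrix.diagonal (funext fun i => ?_)
          by_cases hi : i ∈ I <;> simp [hd, hi]
        have hTsub : T - U * Matrix.diagonal d * Uᵀ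
            = U * (Matrix.diagonal σ - Matrix.diagonal d) * Uᵀ := by
          rw [hT, Matrix.mul_sub, Matrix.sub_mul]
        calc (U * Matrix.diagonal d * Uᵀ) * (T - U * Matrix.diagonal d * Uᵀ)
            = (U * Matrix.diagonal d * Uᵀ) *
              (U * (Matrix.diagonal σ - Matrix.diagonal d) * Uᵀ) := by rw [hTsub]
          _ = U * (Matrix.diagonal d * (Matrix.diagonal σ - Matrix.diagonal d)) * Uᵀ :=
              conj_mul _ _
          _ = 0 := by rw [key, Matrix.mul_zero, Matrix.zero_mul]
      · rw [conj_rank, rank_diagI, hI]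
  refine ⟨hmain, ?_⟩
  classical
  -- counting
  have hset : {S : Matrix (Fin n) (Fin n) ℝ | S.IsSymm ∧ S * (T - S) = 0 ∧ S.rank = r}
      = (fun I : Finset (Fin n) =>
          U * Matrix.diagonal (fun i => if i ∈ I then σ i else 0) * Uᵀ) ''
        {I : Finset (Fin n) | I.card = r} := by
    ext S
    constructor
    · rintro ⟨hsym, h1, h2⟩
      obtain ⟨I, hI, rfl⟩ := (hmain S hsym).mp ⟨h1, h2⟩
      exact ⟨I, hI, rfl⟩
    · rintro ⟨I, hI, rfl⟩
      have hsym : (U * Matrix.diagonal (fun i => if i ∈ I then σ i else 0) * Uᵀ).IsSymm := by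
        unfold Matrix.IsSymm
        simp only [Matrix.transpose_mul, Matrix.transpose_transpose,
          Matrix.diagonal_transpose, Matrix.mul_assoc]
      have := (hmain _ hsym).mpr ⟨I, hI, rfl⟩
      exact ⟨hsym, this.1, this.2⟩
  rw [hset]
  have hinj : Set.InjOn (fun I : Finset (Fin n) =>
      U * Matrix.diagonal (fun i => if i ∈ I then σ i else 0) * Uᵀ)
      {I : Finset (Fin n) | I.card = r} := by
    intro I1 _ I2 _ h
    have hD := conj_inj _ _ h
    have hdd := Matrix.diagonal_injective hD
    ext i
    have hval : (if i ∈ I1 then σ i else 0) = (if i ∈ I2 then σ i else 0) := congrFun hdd i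
    by_cases h1 : i ∈ I1 <;> by_cases h2 : i ∈ I2
    · simp [h1, h2]
    · rw [if_pos h1, if_neg h2] at hval; exact absurd hval (hσ0 i)
    · rw [if_neg h1, if_pos h2] at hval; exact absurd hval.symm (hσ0 i)
    · simp [h1, h2]
  rw [Set.ncard_image_of_injOn hinj]
  have : {I : Finset (Fin n) | I.card = r} = (↑((Finset.univ : Finset (Fin n)).powersetCard r) : Set (Finset (Fin n))) := by
    ext I; simp [Finset.mem_powersetCard_univ]
  rw [this, Set.ncard_coe_finset, Finset.card_powersetCard]
  simp
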